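/- arXiv:math/0312096 — 3 statements merged into one kernel-verified Lean document; each statement's English description precedes it below -/
import Mathlib

section
/- Let X be a geodesic metric space and let Γ act cocompactly by isometries on X, say X = ⋃_{γ∈Γ} γC for a compact set C. Fix p ∈ X. Suppose there is a constant C₀ such that for every γ ∈ Γ there is a geodesic ray α from p with d(γp, α([0,∞))) ≤ C₀. Then X is almost geodesically complete: there is a constant C₁ such that for all q, q' ∈ X there is a geodesic ray β with β(0) = q and d(q', β([0,∞))) ≤ C₁. -/
open Metric Set

/-- A unit-speed geodesic segment from `x` to `y`, parametrized on `[0, dist x y]`. -/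
def IsGeodesicSegment {X : Type*} [MetricSpace X] (γ : ℝ → X) (x y : X) : Prop :=
  γ 0 = x ∧ γ (dist x y) = y ∧
    ∀ s ∈ Set.Icc (0:ℝ) (dist x y), ∀ t ∈ Set.Icc (0:ℝ) (dist x y),
      dist (γ s) (γ t) = |s - t|

/-- A geodesic metric space: any two points are joined by a geodesic segment. -/
def GeodesicSpace (X : Type*) [MetricSpace X] : Prop :=
  ∀ x y : X, ∃ γ : ℝ → X, IsGeodesicSegment γ x y

/-- CAT(0): a geodesic space in which every geodesic triangle satisfies the Euclidean
comparison inequality (stated as the standard convexity/comparison inequality along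
geodesics, which is equivalent to the CAT(0) condition). -/
def CAT0 (X : Type*) [MetricSpace X] : Prop :=
  GeodesicSpace X ∧
    ∀ (y z : X) (γ : ℝ → X), IsGeodesicSegment γ y z → ∀ x : X, ∀ t ∈ Set.Icc (0:ℝ) 1,
      dist x (γ (t * dist y z)) ^ 2 ≤
        (1 - t) * dist x y ^ 2 + t * dist x z ^ 2 - t * (1 - t) * dist y z ^ 2

/-- A (unit-speed) geodesic ray, parametrized on `[0, ∞)`. -/
def IsGeodesicRay {X : Type*} [MetricSpace X] (α : ℝ → X) : Prop :=
  ∀ s t : ℝ, 0 ≤ s → 0 ≤ t → dist (α s) (α t) = |s - t|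

section Aux
variable {X : Type*} [MetricSpace X]

lemma geodesic_reverse {γ : ℝ → X} {x y : X} (h : IsGeodesicSegment γ x y) :
    IsGeodesicSegment (fun s => γ (dist x y - s)) y x := by
  obtain ⟨h0, hd, hseg⟩ := h
  refine ⟨by simpa using hd, by simp [dist_comm y x, h0], ?_⟩
  intro s hs t ht
  rw [dist_comm y x] at hs ht
  rw [hseg _ ⟨by linarith [hs.2], by linarith [hs.1]⟩ _ ⟨by linarith [ht.2], by linarith [ht.1]⟩]
  rw [show dist x y - s - (dist x y - t) = t - s by ring, abs_sub_comm]

lemma geodesic_restrict {γ : ℝ → X} {x y : X} (h : IsGeodesicSegment γ x y)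
    {u v : ℝ} (hu : 0 ≤ u) (huv : u ≤ v) (hv : v ≤ dist x y) :
    IsGeodesicSegment (fun s => γ (u + s)) (γ u) (γ v) ∧ dist (γ u) (γ v) = v - u := by
  obtain ⟨h0, hd, hseg⟩ := h
  have hdist : dist (γ u) (γ v) = v - u := by
    rw [hseg u ⟨hu, huv.trans hv⟩ v ⟨hu.trans huv, hv⟩, abs_of_nonpos (by linarith)]; ring
  refine ⟨⟨by simp, by rw [hdist]; simp, ?_⟩, hdist⟩
  intro s hs t ht
  rw [hdist] at hs ht
  rw [hseg (u+s) ⟨by linarith [hs.1], by linarith [hs.2]⟩ (u+t)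
    ⟨by linarith [ht.1], by linarith [ht.2]⟩]
  congr 1; ring

lemma midpoint_common_vertex (hX : CAT0 X) {γ δ : ℝ → X} {a b c : X}
    (hγ : IsGeodesicSegment γ a b) (hδ : IsGeodesicSegment δ a c) :
    dist (γ (dist a b / 2)) (δ (dist a c / 2)) ≤ dist b c / 2 := by
  set m₁ := γ (dist a b / 2) with hm₁
  set m₂ := δ (dist a c / 2) with hm₂
  have h1 : dist m₁ m₂ ^ 2 ≤
      (1 - 1/2) * dist m₁ a ^ 2 + (1/2) * dist m₁ c ^ 2 - (1/2) * (1 - 1/2) * dist a c ^ 2 := by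
    have := hX.2 a c δ hδ m₁ (1/2) ⟨by norm_num, by norm_num⟩
    rwa [show (1/2 : ℝ) * dist a c = dist a c / 2 by ring] at this
  have h2 : dist m₁ a = dist a b / 2 := by
    have := hγ.2.2 (dist a b / 2) ⟨by positivity, by linarith [dist_nonneg (x := a) (y := b)]⟩
      0 ⟨le_refl _, dist_nonneg⟩
    rw [hγ.1] at this
    rw [← hm₁] at this
    rw [this, sub_zero, abs_of_nonneg (by positivity)]
  have h3 : dist c m₁ ^ 2 ≤
      (1 - 1/2) * dist c a ^ 2 + (1/2) * dist c b ^ 2 - (1/2) * (1 - 1/2) * dist a b ^ 2 := by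
    have := hX.2 a b γ hγ c (1/2) ⟨by norm_num, by norm_num⟩
    rwa [show (1/2 : ℝ) * dist a b = dist a b / 2 by ring] at this
  have h4 : dist m₁ m₂ ^ 2 ≤ (dist b c / 2) ^ 2 := by
    rw [dist_comm c m₁] at h3
    rw [dist_comm c b, dist_comm c a] at h3
    rw [h2] at h1
    nlinarith [h1, h3]
  have h5 : (0:ℝ) ≤ dist b c / 2 := by positivity
  nlinarith [dist_nonneg (x := m₁) (y := m₂), h4, h5]

lemma midpoint_pair (hX : CAT0 X) {γ δ : ℝ → X} {a b a' b' : X}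
    (hγ : IsGeodesicSegment γ a b) (hδ : IsGeodesicSegment δ a' b') :
    dist (γ (dist a b / 2)) (δ (dist a' b' / 2)) ≤ (dist a a' + dist b b') / 2 := by
  obtain ⟨ε, hε⟩ := hX.1 a b'
  have h1 := midpoint_common_vertex hX hγ hε
  have h2 : dist (δ (dist a' b' / 2)) (ε (dist a b' / 2)) ≤ dist a a' / 2 := by
    have h2 := midpoint_common_vertex hX (geodesic_reverse hδ) (geodesic_reverse hε)
    simp only [dist_comm b' a', dist_comm b' a, sub_half] at h2
    rwa [dist_comm a' a] at h2
  calc dist (γ (dist a b / 2)) (δ (dist a' b' / 2))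
      ≤ dist (γ (dist a b / 2)) (ε (dist a b' / 2)) + dist (ε (dist a b' / 2)) (δ (dist a' b' / 2)) :=
        dist_triangle _ _ _
    _ ≤ dist b b' / 2 + dist a a' / 2 := by rw [dist_comm (ε _)]; exact add_le_add h1 h2
    _ = (dist a a' + dist b b') / 2 := by ring

end Aux

section Conv
variable {X : Type*} [MetricSpace X]

lemma dyadic_convexity (hX : CAT0 X) {γ δ : ℝ → X} {a b a' b' : X}
    (hγ : IsGeodesicSegment γ a b) (hδ : IsGeodesicSegment δ a' b') :
    ∀ k : ℕ, ∀ j : ℕ, j ≤ 2^k →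
      dist (γ (((j:ℝ) / 2^k) * dist a b)) (δ (((j:ℝ) / 2^k) * dist a' b'))
        ≤ (1 - (j:ℝ)/2^k) * dist a a' + ((j:ℝ)/2^k) * dist b b' := by
  intro k
  induction k with
  | zero =>
    intro j hj
    interval_cases j
    · simpa [hγ.1, hδ.1] using le_refl (dist a a')
    · simp only [Nat.cast_one, pow_zero, div_one, one_mul, hγ.2.1, hδ.2.1]
      simpa using le_refl (dist b b')
  | succ k ih =>
    intro j hj
    have h2k : (0:ℝ) < 2^k := by positivity
    have hdab : (0:ℝ) ≤ dist a b := dist_nonneg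
    have hdab' : (0:ℝ) ≤ dist a' b' := dist_nonneg
    rcases Nat.even_or_odd j with ⟨i, hi⟩ | ⟨i, hi⟩
    · subst hi
      have hi2 : i ≤ 2^k := by omega
      have hcast : ((i + i : ℕ) : ℝ) / 2^(k+1) = (i:ℝ)/2^k := by
        push_cast; field_simp; ring
      rw [hcast]
      exact ih i hi2
    · subst hi
      have hi2 : i + 1 ≤ 2^k := by omega
      have hi1 : i ≤ 2^k := by omega
      set d := dist a b with hdd
      set d' := dist a' b' with hdd'
      set t₀ := (i:ℝ)/2^k with ht₀
      set t₁ := ((i:ℝ)+1)/2^k with ht₁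
      have ht₀0 : 0 ≤ t₀ := by positivity
      have ht₀₁ : t₀ ≤ t₁ := by rw [ht₀, ht₁]; gcongr; linarith
      have ht₁1 : t₁ ≤ 1 := by
        rw [ht₁, div_le_one h2k]
        have : ((i:ℝ)+1) ≤ ((2^k : ℕ) : ℝ) := by exact_mod_cast hi2
        simpa using this
      have huv : t₀ * d ≤ t₁ * d := mul_le_mul_of_nonneg_right ht₀₁ hdab
      have huv' : t₀ * d' ≤ t₁ * d' := mul_le_mul_of_nonneg_right ht₀₁ hdab'
      have hu0 : 0 ≤ t₀ * d := mul_nonneg ht₀0 hdab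
      have hu0' : 0 ≤ t₀ * d' := mul_nonneg ht₀0 hdab'
      have hvd : t₁ * d ≤ d := mul_le_of_le_one_left hdab ht₁1
      have hvd' : t₁ * d' ≤ d' := mul_le_of_le_one_left hdab' ht₁1
      obtain ⟨hres, hdres⟩ := geodesic_restrict hγ hu0 huv hvd
      obtain ⟨hres', hdres'⟩ := geodesic_restrict hδ hu0' huv' hvd'
      have hmid := midpoint_pair hX hres hres'
      rw [hdres, hdres'] at hmid
      beta_reduce at hmid
      have e1 : t₀ * d + (t₁ * d - t₀ * d) / 2 = (((2*i+1 : ℕ):ℝ) / 2^(k+1)) * d := by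
        rw [ht₀, ht₁]; push_cast; field_simp; ring
      have e2 : t₀ * d' + (t₁ * d' - t₀ * d') / 2 = (((2*i+1 : ℕ):ℝ) / 2^(k+1)) * d' := by
        rw [ht₀, ht₁]; push_cast; field_simp; ring
      rw [e1, e2] at hmid
      have b₀ := ih i hi1
      have b₁ := ih (i+1) hi2
      push_cast at b₁
      rw [← ht₀] at b₀
      rw [← ht₁] at b₁
      refine hmid.trans ?_
      have e3 : ((2*i+1 : ℕ):ℝ) / 2^(k+1) = (t₀ + t₁)/2 := by
        rw [ht₀, ht₁]; push_cast; field_simp; ring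
      rw [e3]
      linarith [b₀, b₁]

lemma geodesic_convexity (hX : CAT0 X) {γ δ : ℝ → X} {a b a' b' : X}
    (hγ : IsGeodesicSegment γ a b) (hδ : IsGeodesicSegment δ a' b')
    {t : ℝ} (ht0 : 0 ≤ t) (ht1 : t ≤ 1) :
    dist (γ (t * dist a b)) (δ (t * dist a' b'))
      ≤ (1 - t) * dist a a' + t * dist b b' := by
  have hd : (0:ℝ) ≤ dist a b := dist_nonneg
  have hd' : (0:ℝ) ≤ dist a' b' := dist_nonneg
  have hA : (0:ℝ) ≤ dist a a' := dist_nonneg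
  have hB : (0:ℝ) ≤ dist b b' := dist_nonneg
  refine le_of_forall_pos_le_add fun ε hε => ?_
  have hM0 : (0:ℝ) < dist a b + dist a' b' + dist a a' + dist b b' + dist b b' + 1 := by
    positivity
  set ε' := ε / (dist a b + dist a' b' + dist a a' + dist b b' + dist b b' + 1) with hε'
  have hε'0 : 0 < ε' := by positivity
  obtain ⟨k, hk⟩ := pow_unbounded_of_one_lt (1/ε') (by norm_num : (1:ℝ) < 2)
  have h2k : (0:ℝ) < 2^k := by positivity
  have hek : (1:ℝ)/2^k ≤ ε' := by
    rw [div_le_iff₀ h2k]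
    rw [div_lt_iff₀ hε'0] at hk
    nlinarith
  set j := ⌊t * 2^k⌋₊ with hj
  have hjle : (j:ℝ) ≤ t * 2^k := Nat.floor_le (by positivity)
  have hjgt : t * 2^k < (j:ℝ) + 1 := Nat.lt_floor_add_one _
  have hjk : j ≤ 2^k := by
    have h1 : t * 2^k ≤ 2^k := mul_le_of_le_one_left h2k.le ht1
    have : (j:ℝ) ≤ ((2^k : ℕ) : ℝ) := by push_cast; linarith
    exact_mod_cast this
  set t' := (j:ℝ)/2^k with ht'
  have ht'le : t' ≤ t := by rw [ht', div_le_iff₀ h2k]; linarith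
  have ht'0 : 0 ≤ t' := by positivity
  have htt' : t - t' ≤ ε' := by
    have h1 : (t - t') * 2^k ≤ 1 := by
      have : t' * 2^k = (j:ℝ) := by rw [ht']; field_simp
      nlinarith
    have h2 := hek
    rw [div_le_iff₀ h2k] at h2
    exact le_of_mul_le_mul_right (h1.trans h2) h2k
  have hdy := dyadic_convexity hX hγ hδ k j hjk
  rw [← ht'] at hdy
  have ht'1 : t' ≤ 1 := ht'le.trans ht1
  have hseg1 : dist (γ (t * dist a b)) (γ (t' * dist a b)) = (t - t') * dist a b := by
    rw [hγ.2.2 (t * dist a b) ⟨mul_nonneg ht0 hd, mul_le_of_le_one_left hd ht1⟩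
      (t' * dist a b) ⟨mul_nonneg ht'0 hd, mul_le_of_le_one_left hd ht'1⟩]
    rw [show t * dist a b - t' * dist a b = (t - t') * dist a b by ring,
      abs_of_nonneg (mul_nonneg (by linarith) hd)]
  have hseg2 : dist (δ (t' * dist a' b')) (δ (t * dist a' b')) = (t - t') * dist a' b' := by
    rw [hδ.2.2 (t' * dist a' b') ⟨mul_nonneg ht'0 hd', mul_le_of_le_one_left hd' ht'1⟩
      (t * dist a' b') ⟨mul_nonneg ht0 hd', mul_le_of_le_one_left hd' ht1⟩]
    rw [show t' * dist a' b' - t * dist a' b' = -((t - t') * dist a' b') by ring,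
      abs_neg, abs_of_nonneg (mul_nonneg (by linarith) hd')]
  have htri := dist_triangle4 (γ (t * dist a b)) (γ (t' * dist a b))
    (δ (t' * dist a' b')) (δ (t * dist a' b'))
  rw [hseg1, hseg2] at htri
  have htt'0 : 0 ≤ t - t' := by linarith
  have h1 : (t - t') * dist a b ≤ ε' * dist a b := mul_le_mul_of_nonneg_right htt' hd
  have h2 : (t - t') * dist a' b' ≤ ε' * dist a' b' := mul_le_mul_of_nonneg_right htt' hd'
  have h3 : (t - t') * (dist a a' + dist b b') ≤ ε' * (dist a a' + dist b b') :=
    mul_le_mul_of_nonneg_right htt' (by linarith)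
  have hAB : (1 - t') * dist a a' + t' * dist b b'
      ≤ (1 - t) * dist a a' + t * dist b b' + (t - t') * (dist a a' + dist b b') := by
    nlinarith [mul_nonneg htt'0 hB]
  have hcalc : dist (γ (t * dist a b)) (δ (t * dist a' b'))
      ≤ (1 - t) * dist a a' + t * dist b b'
        + ε' * (dist a b + dist a' b' + dist a a' + dist b b' + dist b b' + 1) := by
    have hee : 0 ≤ ε' := hε'0.le
    nlinarith [htri, hdy, h1, h2, h3]
  refine hcalc.trans ?_
  have : ε' * (dist a b + dist a' b' + dist a a' + dist b b' + dist b b' + 1) = ε := by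
    rw [hε']; field_simp
  linarith

end Conv

section Ray
open Topology Filter
variable {X : Type*} [MetricSpace X] [ProperSpace X]

lemma exists_asymptotic_ray (hX : CAT0 X) {α : ℝ → X} (hα : IsGeodesicRay α) (q : X) :
    ∃ β : ℝ → X, IsGeodesicRay β ∧ β 0 = q ∧
      ∀ s : ℝ, 0 ≤ s → dist (β s) (α s) ≤ dist q (α 0) := by
  classical
  set p₀ := α 0 with hp₀
  set D := dist q p₀ with hD
  have hD0 : 0 ≤ D := dist_nonneg
  choose σ hσ using fun n : ℕ => hX.1 q (α n)
  set L : ℕ → ℝ := fun n => dist q (α n) with hLdef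
  have hL0 : ∀ n, 0 ≤ L n := fun n => dist_nonneg
  have hLn : ∀ n : ℕ, |L n - n| ≤ D := by
    intro n
    have h1 : dist p₀ (α n) = (n:ℝ) := by
      rw [hp₀, hα 0 n le_rfl (Nat.cast_nonneg n)]
      simp [abs_of_nonpos (neg_nonpos.mpr (Nat.cast_nonneg n : (0:ℝ) ≤ n))]
    have := abs_dist_sub_le q p₀ (α n)
    rw [h1] at this
    exact this
  -- the approximating maps
  set f : ℕ → ℝ → X := fun n s => σ n (min (max s 0) (L n)) with hf
  have hfmem : ∀ n s, f n s ∈ closedBall q (max s 0) := by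
    intro n s
    have hms : 0 ≤ min (max s 0) (L n) := le_min (le_max_right _ _) (hL0 n)
    have hml : min (max s 0) (L n) ≤ L n := min_le_right _ _
    have := (hσ n).2.2 (min (max s 0) (L n)) ⟨hms, hml⟩ 0 ⟨le_rfl, hL0 n⟩
    rw [(hσ n).1] at this
    rw [mem_closedBall, hf]
    simp only
    rw [this, sub_zero, abs_of_nonneg hms]
    exact min_le_left _ _
  obtain ⟨u, hu⟩ := Filter.exists_ultrafilter_le (Filter.atTop : Filter ℕ)
  have key : ∀ s : ℝ, ∃ x, Filter.Tendsto (fun n => f n s) u (𝓝 x) := by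
    intro s
    have hcb : IsCompact (closedBall q (max s 0)) := isCompact_closedBall q _
    obtain ⟨x, -, hx⟩ := hcb.ultrafilter_le_nhds (u.map (fun n => f n s))
      (by
        rw [Ultrafilter.coe_map]
        exact Filter.le_principal_iff.mpr
          (Filter.mem_map.mpr (Filter.univ_mem' (fun n => hfmem n s))))
    exact ⟨x, hx⟩
  choose β hβ using key
  -- eventually f n s = σ n s for s in range
  have hfev : ∀ s : ℝ, 0 ≤ s → ∀ n : ℕ, s + D ≤ n → f n s = σ n s := by
    intro s hs n hn
    have h1 : s ≤ L n := by
      have := (abs_le.mp (hLn n)).2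
      have h2 := (abs_le.mp (hLn n)).1
      linarith
    rw [hf]
    simp only
    rw [max_eq_left hs, min_eq_left h1]
  refine ⟨β, ?_, ?_, ?_⟩
  · -- geodesic ray
    intro s t hs ht
    have h1 : Filter.Tendsto (fun n => dist (f n s) (f n t)) u (𝓝 (dist (β s) (β t))) :=
      (hβ s).dist (hβ t)
    have h2 : ∀ᶠ n in (Filter.atTop : Filter ℕ), dist (f n s) (f n t) = |s - t| := by
      have hev : ∀ᶠ n : ℕ in Filter.atTop, max s t + D ≤ (n:ℝ) :=
        tendsto_natCast_atTop_atTop.eventually_ge_atTop _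
      filter_upwards [hev] with n hn
      have hsd : s + D ≤ (n:ℝ) := by
        have := le_max_left s t; linarith
      have htd : t + D ≤ (n:ℝ) := by
        have := le_max_right s t; linarith
      rw [hfev s hs n hsd, hfev t ht n htd]
      have hsL : s ≤ L n := by
        have := (abs_le.mp (hLn n)).1; linarith
      have htL : t ≤ L n := by
        have := (abs_le.mp (hLn n)).1; linarith
      exact (hσ n).2.2 s ⟨hs, hsL⟩ t ⟨ht, htL⟩
    have h3 : Filter.Tendsto (fun n => dist (f n s) (f n t)) u (𝓝 |s - t|) := by
      refine Filter.Tendsto.congr' ?_ tendsto_const_nhds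
      exact (Filter.EventuallyEq.symm (h2.filter_mono hu))
    exact tendsto_nhds_unique h1 h3
  · -- β 0 = q
    have h1 := hβ 0
    have h2 : Filter.Tendsto (fun n => f n 0) u (𝓝 q) := by
      have he : (fun n => f n 0) = fun _ => q := by
        funext n
        rw [hf]
        simp only
        rw [max_self, min_eq_left (hL0 n), (hσ n).1]
      rw [he]
      exact tendsto_const_nhds
    exact tendsto_nhds_unique h1 h2
  · -- closeness to α
    intro s hs
    have h1 : Filter.Tendsto (fun n => dist (f n s) (α s)) u (𝓝 (dist (β s) (α s))) :=
      (hβ s).dist tendsto_const_nhds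
    refine le_of_forall_pos_le_add fun ε hε => ?_
    have h2 : ∀ᶠ n in (Filter.atTop : Filter ℕ), dist (f n s) (α s) ≤ D + ε := by
      have hev : ∀ᶠ n : ℕ in Filter.atTop,
          max (s + D + 1) (s * D / ε + D) ≤ (n:ℝ) :=
        tendsto_natCast_atTop_atTop.eventually_ge_atTop _
      filter_upwards [hev] with n hn
      have hn1 : s + D + 1 ≤ (n:ℝ) := le_trans (le_max_left _ _) hn
      have hn2 : s * D / ε + D ≤ (n:ℝ) := le_trans (le_max_right _ _) hn
      have hLlb := (abs_le.mp (hLn n)).1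
      have hLub := (abs_le.mp (hLn n)).2
      have hLs : s + 1 ≤ L n := by linarith
      have hLpos : 0 < L n := by linarith
      have hLe : s * D ≤ ε * L n := by
        have h3 : s * D / ε ≤ L n := by linarith
        rw [div_le_iff₀ hε] at h3
        linarith [mul_comm (L n) ε]
      rw [hfev s hs n (by linarith)]
      -- convexity comparison
      have hαseg : IsGeodesicSegment α p₀ (α n) := by
        have hdn : dist p₀ (α n) = (n:ℝ) := by
          rw [hp₀, hα 0 n le_rfl (Nat.cast_nonneg n)]
          simp [abs_of_nonpos (neg_nonpos.mpr (Nat.cast_nonneg n : (0:ℝ) ≤ n))]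
        refine ⟨rfl, by rw [hdn], ?_⟩
        intro x hx y hy
        rw [hdn] at hx hy
        exact hα x y hx.1 hy.1
      have ht0 : 0 ≤ s / L n := div_nonneg hs hLpos.le
      have ht1 : s / L n ≤ 1 := by
        rw [div_le_one hLpos]; linarith
      have hconv := geodesic_convexity hX (hσ n) hαseg ht0 ht1
      have harg1 : s / L n * dist q (α n) = s := by
        show s / L n * L n = s
        field_simp
      have hdn : dist p₀ (α n) = (n:ℝ) := by
        rw [hp₀, hα 0 n le_rfl (Nat.cast_nonneg n)]
        simp [abs_of_nonpos (neg_nonpos.mpr (Nat.cast_nonneg n : (0:ℝ) ≤ n))]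
      rw [harg1, hdn] at hconv
      have hconv2 : dist (σ n s) (α (s / L n * n)) ≤ D := by
        refine hconv.trans ?_
        rw [dist_self, mul_zero, add_zero, ← hD]
        nlinarith [mul_nonneg ht0 hD0]
      have hclose : dist (α (s / L n * n)) (α s) ≤ ε := by
        rw [hα (s / L n * n) s (mul_nonneg ht0 (Nat.cast_nonneg n)) hs]
        have he1 : s / L n * n - s = (s / L n) * ((n:ℝ) - L n) := by
          field_simp
        rw [he1, abs_mul, abs_of_nonneg ht0]
        have habs : |(n:ℝ) - L n| ≤ D := by
          rw [abs_sub_comm]; exact hLn n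
        have h4 : s / L n * |(n:ℝ) - L n| ≤ s / L n * D :=
          mul_le_mul_of_nonneg_left habs ht0
        refine h4.trans ?_
        rw [div_mul_eq_mul_div, div_le_iff₀ hLpos]
        linarith [mul_comm ε (L n)]
      calc dist (σ n s) (α s) ≤ dist (σ n s) (α (s / L n * n)) + dist (α (s / L n * n)) (α s) :=
            dist_triangle _ _ _
        _ ≤ D + ε := add_le_add hconv2 hclose
    have h3 : ∀ᶠ n in (u : Filter ℕ), dist (f n s) (α s) ≤ D + ε := h2.filter_mono hu
    exact le_of_tendsto h1 h3

end Ray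

/-- If rays from a fixed basepoint p come uniformly close to every orbit point γp
of a cocompact isometric action on a (proper CAT(0)) geodesic space, then the space
is almost geodesically complete. -/
theorem almost_geodesic_completeness_from_orbit {X Γ : Type*} [MetricSpace X]
    [ProperSpace X] [Group Γ] [MulAction Γ X] (hX : CAT0 X)
    (hiso : ∀ γ : Γ, Isometry (fun x : X => γ • x))
    (C : Set X) (hC : IsCompact C)
    (hcov : ∀ x : X, ∃ (γ : Γ), ∃ c ∈ C, x = γ • c)
    (p : X) (C₀ : ℝ)
    (h : ∀ γ : Γ, ∃ α : ℝ → X, IsGeodesicRay α ∧ α 0 = p ∧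
      Metric.infDist (γ • p) (α '' Set.Ici 0) ≤ C₀) :
    ∃ C₁ : ℝ, ∀ q q' : X, ∃ β : ℝ → X, IsGeodesicRay β ∧ β 0 = q ∧
      Metric.infDist q' (β '' Set.Ici 0) ≤ C₁ := by
  obtain ⟨R, hR⟩ := hC.isBounded.subset_closedBall p
  have horb : ∀ x : X, ∃ γ : Γ, dist x (γ • p) ≤ R := by
    intro x
    obtain ⟨γ, c, hc, hx⟩ := hcov x
    refine ⟨γ, ?_⟩
    rw [hx]
    have := (hiso γ).dist_eq c p
    rw [this]
    exact mem_closedBall.mp (hR hc)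
  refine ⟨C₀ + R + R, fun q q' => ?_⟩
  obtain ⟨γ, hγ⟩ := horb q
  obtain ⟨γ', hγ'⟩ := horb q'
  obtain ⟨α, hαray, hα0, hαdist⟩ := h (γ⁻¹ * γ')
  -- translated ray
  set αγ : ℝ → X := fun s => γ • α s with hαγ
  have hαγray : IsGeodesicRay αγ := by
    intro s t hs ht
    rw [hαγ]
    simp only
    rw [(hiso γ).dist_eq]
    exact hαray s t hs ht
  have hαγ0 : αγ 0 = γ • p := by rw [hαγ]; simp only; rw [hα0]
  obtain ⟨β, hβray, hβ0, hβdist⟩ := exists_asymptotic_ray hX hαγray q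
  rw [hαγ0] at hβdist
  refine ⟨β, hβray, hβ0, ?_⟩
  refine le_of_forall_pos_le_add fun ε hε => ?_
  have hne : (α '' Set.Ici 0).Nonempty := ⟨α 0, Set.mem_image_of_mem _ Set.self_mem_Ici⟩
  have hlt : Metric.infDist ((γ⁻¹ * γ') • p) (α '' Set.Ici 0) < C₀ + ε := by
    have h0 : 0 ≤ Metric.infDist ((γ⁻¹ * γ') • p) (α '' Set.Ici 0) := Metric.infDist_nonneg
    linarith
  obtain ⟨y, ⟨s₀, hs₀, rfl⟩, hy⟩ := (Metric.infDist_lt_iff hne).mp hlt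
  -- dist q' (β s₀) ≤ R + (C₀ + ε) + R
  have h1 : dist (γ' • p) (αγ s₀) < C₀ + ε := by
    have he : γ' • p = γ • ((γ⁻¹ * γ') • p) := by
      rw [smul_smul, mul_inv_cancel_left]
    rw [he, hαγ]
    simp only
    rw [(hiso γ).dist_eq]
    exact hy
  have h2 : dist (β s₀) (αγ s₀) ≤ dist q (γ • p) := hβdist s₀ hs₀
  have h3 : dist q' (β s₀) ≤ R + (C₀ + ε) + R := by
    calc dist q' (β s₀) ≤ dist q' (γ' • p) + dist (γ' • p) (αγ s₀) + dist (αγ s₀) (β s₀) :=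
          dist_triangle4 _ _ _ _
      _ ≤ R + (C₀ + ε) + R := by
          rw [dist_comm (αγ s₀) (β s₀)]
          exact add_le_add (add_le_add hγ' h1.le) (h2.trans hγ)
  have h4 : Metric.infDist q' (β '' Set.Ici 0) ≤ dist q' (β s₀) :=
    Metric.infDist_le_dist_of_mem ⟨s₀, hs₀, rfl⟩
  linarith
end

section
/- Let X be the metric space obtained from the half-line [0,∞) by attaching, for each positive integer N, a segment of length N at the point N (with the induced path metric). Then X is a proper geodesic metric space that is not almost geodesically complete. -/
open Metric Set

/-- Almost geodesic completeness: some constant C works for all pairs of points. -/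
def AlmostGeodesicallyComplete (X : Type*) [MetricSpace X] : Prop :=
  ∃ C : ℝ, ∀ p q : X, ∃ α : ℝ → X, IsGeodesicRay α ∧ α 0 = p ∧
    Metric.infDist q (α '' Set.Ici 0) ≤ C

/-- The half-line [0,∞) (second coordinate 0) with, for each positive integer N,
a segment of length N attached at the point N (realized as a vertical segment). -/
def SpikeCarrier : Set (ℝ × ℝ) :=
  {p | (p.2 = 0 ∧ 0 ≤ p.1) ∨ ∃ N : ℕ, 0 < N ∧ p.1 = N ∧ 0 ≤ p.2 ∧ p.2 ≤ N}

/-- The induced path metric on the half-line with attached segments. -/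
noncomputable def spikeDist (p q : ℝ × ℝ) : ℝ :=
  if p.1 = q.1 then |p.2 - q.2| else p.2 + |p.1 - q.1| + q.2

namespace SpikeAux

lemma x_nonneg {p : ℝ × ℝ} (h : p ∈ SpikeCarrier) : 0 ≤ p.1 := by
  rcases h with ⟨_, h⟩ | ⟨N, _, hx, _⟩
  · exact h
  · rw [hx]; positivity

lemma y_nonneg {p : ℝ × ℝ} (h : p ∈ SpikeCarrier) : 0 ≤ p.2 := by
  rcases h with ⟨h, _⟩ | ⟨N, _, _, hy, _⟩
  · rw [h]
  · exact hy

lemma spike_of_pos {p : ℝ × ℝ} (h : p ∈ SpikeCarrier) (hy : p.2 ≠ 0) :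
    ∃ N : ℕ, 0 < N ∧ p.1 = N ∧ p.2 ≤ N := by
  rcases h with ⟨h, _⟩ | ⟨N, hN, hx, _, hy'⟩
  · exact absurd h hy
  · exact ⟨N, hN, hx, hy'⟩

lemma mem_between {x a y : ℝ} (ha : (x, a) ∈ SpikeCarrier) (h0 : 0 ≤ y) (hy : y ≤ a) :
    (x, y) ∈ SpikeCarrier := by
  rcases eq_or_lt_of_le h0 with h | h
  · exact Or.inl ⟨h.symm, x_nonneg (p := (x, a)) ha⟩
  · rcases spike_of_pos ha (by simp only; nlinarith) with ⟨N, hN, hx, hA⟩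
    exact Or.inr ⟨N, hN, hx, h0, le_trans hy hA⟩

lemma spikeDist_comm (p q : ℝ × ℝ) : spikeDist p q = spikeDist q p := by
  unfold spikeDist
  rcases eq_or_ne p.1 q.1 with h | h
  · rw [if_pos h, if_pos h.symm, abs_sub_comm]
  · rw [if_neg h, if_neg (Ne.symm h), abs_sub_comm]; ring

noncomputable def spikePath (u v : ℝ × ℝ) (t : ℝ) : ℝ × ℝ :=
  if u.1 = v.1 then (u.1, u.2 + if u.2 ≤ v.2 then t else -t)
  else if t ≤ u.2 then (u.1, u.2 - t)
  else if t ≤ u.2 + |u.1 - v.1| then (u.1 + (if u.1 ≤ v.1 then t - u.2 else u.2 - t), 0)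
  else (v.1, t - u.2 - |u.1 - v.1|)

lemma spikeDist_eq_of_ne {u v : ℝ × ℝ} (h : u.1 ≠ v.1) :
    spikeDist u v = u.2 + |u.1 - v.1| + v.2 := if_neg h

lemma spikePath_zero {u v : ℝ × ℝ} (hu : u ∈ SpikeCarrier) : spikePath u v 0 = u := by
  unfold spikePath
  rcases eq_or_ne u.1 v.1 with h | h
  · rw [if_pos h]
    split_ifs <;> simp
  · rw [if_neg h, if_pos (y_nonneg hu)]
    simp

lemma spikePath_last {u v : ℝ × ℝ} (hu : u ∈ SpikeCarrier) (hv : v ∈ SpikeCarrier) :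
    spikePath u v (spikeDist u v) = v := by
  unfold spikePath spikeDist
  rcases eq_or_ne u.1 v.1 with h | h
  · rw [if_pos h, if_pos h]
    rcases le_or_gt u.2 v.2 with h2 | h2
    · rw [if_pos h2, abs_of_nonpos (by linarith)]
      ext <;> simp [h] <;> ring
    · rw [if_neg (not_le.2 h2), abs_of_pos (by linarith)]
      ext <;> simp [h] <;> ring
  · have hD : 0 < |u.1 - v.1| := abs_pos.2 (sub_ne_zero.2 h)
    have hv2 := y_nonneg hv
    have hu2 := y_nonneg hu
    rw [if_neg h, if_neg h, if_neg (by push_neg; linarith)]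
    rcases eq_or_lt_of_le hv2 with h2 | h2
    · rw [if_pos (by linarith)]
      rcases le_or_gt u.1 v.1 with h3 | h3
      · rw [if_pos h3, abs_of_nonpos (by linarith)]
        ext <;> simp [← h2] <;> ring
      · rw [if_neg (not_le.2 h3), abs_of_pos (by linarith)]
        ext <;> simp [← h2] <;> ring
    · rw [if_neg (by push_neg; linarith)]
      ext <;> simp <;> ring

lemma spikePath_mem {u v : ℝ × ℝ} (hu : u ∈ SpikeCarrier) (hv : v ∈ SpikeCarrier)
    {t : ℝ} (ht : t ∈ Set.Icc 0 (spikeDist u v)) : spikePath u v t ∈ SpikeCarrier := by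
  obtain ⟨ht0, htd⟩ := ht
  unfold spikePath
  rcases eq_or_ne u.1 v.1 with h | h
  · rw [if_pos h]
    rw [spikeDist, if_pos h] at htd
    rcases le_or_gt u.2 v.2 with h2 | h2
    · rw [if_pos h2, abs_of_nonpos (by linarith)] at *
      have : (u.1, v.2) ∈ SpikeCarrier := h ▸ (by exact hv)
      exact mem_between this (by linarith [y_nonneg hu]) (by linarith)
    · rw [if_neg (not_le.2 h2), abs_of_pos (by linarith)] at *
      exact mem_between hu (by linarith [y_nonneg hv]) (by linarith)
  · rw [if_neg h]
    rw [spikeDist_eq_of_ne h] at htd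
    have hD : 0 < |u.1 - v.1| := abs_pos.2 (sub_ne_zero.2 h)
    rcases le_or_gt t u.2 with h1 | h1
    · rw [if_pos h1]
      exact mem_between (show (u.1, u.2) ∈ SpikeCarrier from hu) (by linarith) (by linarith)
    · rw [if_neg (not_le.2 h1)]
      rcases le_or_gt t (u.2 + |u.1 - v.1|) with h2 | h2
      · rw [if_pos h2]
        refine Or.inl ⟨rfl, ?_⟩
        have hx1 := x_nonneg hu
        have hx2 := x_nonneg hv
        rcases le_or_gt u.1 v.1 with h3 | h3
        · rw [if_pos h3]
          show (0:ℝ) ≤ u.1 + (t - u.2)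
          linarith
        · rw [if_neg (not_le.2 h3)]
          rw [abs_of_pos (by linarith)] at h2
          show (0:ℝ) ≤ u.1 + (u.2 - t)
          linarith
      · rw [if_neg (not_le.2 h2)]
        exact mem_between (show (v.1, v.2) ∈ SpikeCarrier from hv) (by linarith) (by linarith)

end SpikeAux

namespace SpikeAux

lemma spikeDist_same {x a b : ℝ} : spikeDist (x, a) (x, b) = |a - b| := if_pos rfl

lemma spikeDist_ne {x y a b : ℝ} (h : x ≠ y) : spikeDist (x, a) (y, b) = a + |x - y| + b :=
  if_neg h

lemma spikePath_dist_le {u v : ℝ × ℝ} (hu : u ∈ SpikeCarrier) (hv : v ∈ SpikeCarrier)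
    {s t : ℝ} (hs0 : 0 ≤ s) (hst : s ≤ t) (htd : t ≤ spikeDist u v) :
    spikeDist (spikePath u v s) (spikePath u v t) = t - s := by
  unfold spikePath
  rcases eq_or_ne u.1 v.1 with h | h
  · rw [if_pos h, if_pos h]
    rcases le_or_gt u.2 v.2 with h2 | h2
    · rw [if_pos h2, if_pos h2, spikeDist_same,
        show u.2 + s - (u.2 + t) = -(t - s) by ring, abs_neg, abs_of_nonneg (by linarith)]
    · rw [if_neg (not_le.2 h2), if_neg (not_le.2 h2), spikeDist_same,
        show u.2 + -s - (u.2 + -t) = t - s by ring, abs_of_nonneg (by linarith)]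
  · rw [if_neg h, if_neg h]
    rw [spikeDist_eq_of_ne h] at htd
    have hD : 0 < |u.1 - v.1| := abs_pos.2 (sub_ne_zero.2 h)
    rcases le_or_gt t u.2 with h1 | h1
    · -- both in branch 1
      rw [if_pos (le_trans hst h1), if_pos h1, spikeDist_same,
        show u.2 - s - (u.2 - t) = t - s by ring, abs_of_nonneg (by linarith)]
    · rw [if_neg (not_le.2 h1)]
      rcases le_or_gt t (u.2 + |u.1 - v.1|) with h2 | h2
      · -- t in branch 2
        rw [if_pos h2]
        rcases le_or_gt s u.2 with h3 | h3
        · -- s in branch 1, t in branch 2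
          rw [if_pos h3]
          rcases le_or_gt u.1 v.1 with h4 | h4
          · rw [if_pos h4, spikeDist_ne (by intro hh; nlinarith [congrArg (· - u.1) hh]),
              show u.1 - (u.1 + (t - u.2)) = -(t - u.2) by ring, abs_neg,
              abs_of_nonneg (by linarith)]
            ring
          · rw [if_neg (not_le.2 h4), spikeDist_ne (by intro hh; nlinarith [congrArg (· - u.1) hh]),
              show u.1 - (u.1 + (u.2 - t)) = t - u.2 by ring,
              abs_of_nonneg (by linarith)]
            ring
        · -- s, t both in branch 2
          rw [if_neg (not_le.2 h3), if_pos (le_trans hst h2)]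
          rcases eq_or_lt_of_le hst with he | hlt
          · subst he
            rcases le_or_gt u.1 v.1 with h4 | h4
            · rw [if_pos h4, spikeDist_same]; simp
            · rw [if_neg (not_le.2 h4), spikeDist_same]; simp
          · rcases le_or_gt u.1 v.1 with h4 | h4
            · rw [if_pos h4, if_pos h4, spikeDist_ne (by intro hh; nlinarith [congrArg (· - u.1) hh]),
                show u.1 + (s - u.2) - (u.1 + (t - u.2)) = -(t - s) by ring, abs_neg,
                abs_of_nonneg (by linarith)]
              ring
            · rw [if_neg (not_le.2 h4), if_neg (not_le.2 h4),
                spikeDist_ne (by intro hh; nlinarith [congrArg (· - u.1) hh]),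
                show u.1 + (u.2 - s) - (u.1 + (u.2 - t)) = t - s by ring,
                abs_of_nonneg (by linarith)]
              ring
      · -- t in branch 3
        rw [if_neg (not_le.2 h2)]
        rcases le_or_gt s u.2 with h3 | h3
        · -- s in branch 1, t in branch 3
          rw [if_pos h3, spikeDist_ne h]
          ring
        · rw [if_neg (not_le.2 h3)]
          rcases le_or_gt s (u.2 + |u.1 - v.1|) with h4 | h4
          · -- s in branch 2, t in branch 3
            rw [if_pos h4]
            rcases eq_or_lt_of_le h4 with he | hlt
            · -- s at the junction point
              rcases le_or_gt u.1 v.1 with h5 | h5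
              · rw [if_pos h5, abs_of_nonpos (by linarith)] at *
                rw [show u.1 + (s - u.2) = v.1 by linarith, spikeDist_same,
                  abs_of_nonpos (by linarith)]
                linarith
              · rw [if_neg (not_le.2 h5), abs_of_pos (by linarith)] at *
                rw [show u.1 + (u.2 - s) = v.1 by linarith, spikeDist_same,
                  abs_of_nonpos (by linarith)]
                linarith
            · rcases le_or_gt u.1 v.1 with h5 | h5
              · rw [if_pos h5, abs_of_nonpos (by linarith)] at *
                rw [spikeDist_ne (by intro hh; nlinarith [congrArg (· - u.1) hh]),
                  show u.1 + (s - u.2) - v.1 = -((v.1 - u.1) + u.2 - s) by ring, abs_neg,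
                  abs_of_nonneg (by linarith)]
                ring
              · rw [if_neg (not_le.2 h5), abs_of_pos (by linarith)] at *
                rw [spikeDist_ne (by intro hh; nlinarith [congrArg (· - u.1) hh]),
                  show u.1 + (u.2 - s) - v.1 = (u.1 - v.1) + u.2 - s by ring,
                  abs_of_nonneg (by linarith)]
                ring
          · -- s, t both in branch 3
            rw [if_neg (not_le.2 h4), spikeDist_same,
              show s - u.2 - |u.1 - v.1| - (t - u.2 - |u.1 - v.1|) = -(t - s) by ring, abs_neg,
              abs_of_nonneg (by linarith)]

lemma spikePath_dist {u v : ℝ × ℝ} (hu : u ∈ SpikeCarrier) (hv : v ∈ SpikeCarrier)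
    {s t : ℝ} (hs : s ∈ Set.Icc 0 (spikeDist u v)) (ht : t ∈ Set.Icc 0 (spikeDist u v)) :
    spikeDist (spikePath u v s) (spikePath u v t) = |s - t| := by
  rcases le_total s t with h | h
  · rw [spikePath_dist_le hu hv hs.1 h ht.2, abs_of_nonpos (by linarith), neg_sub]
  · rw [spikeDist_comm, spikePath_dist_le hu hv ht.1 h hs.2, abs_of_nonneg (by linarith)]

end SpikeAux

open SpikeAux

/-- The half-line with a segment of length N attached at each positive integer N,
endowed with the path metric, is a proper geodesic space which is not almost
geodesically complete. -/
theorem spike_space_not_almost_geodesically_complete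
    (X : Type*) [MetricSpace X] (φ : X ≃ SpikeCarrier)
    (hφ : ∀ a b : X, dist a b = spikeDist (φ a) (φ b)) :
    ProperSpace X ∧ GeodesicSpace X ∧ ¬ AlmostGeodesicallyComplete X := by
  have key : ∀ u v : SpikeCarrier, dist (φ.symm u) (φ.symm v) = spikeDist ↑u ↑v := by
    intro u v
    rw [hφ, Equiv.apply_symm_apply, Equiv.apply_symm_apply]
  have spikeDist_pair : ∀ (x y : ℝ) (w : ℝ × ℝ),
      spikeDist (x, y) w = if x = w.1 then |y - w.2| else y + |x - w.1| + w.2 :=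
    fun _ _ _ => rfl
  have ho0 : ((0:ℝ), (0:ℝ)) ∈ SpikeCarrier := Or.inl ⟨rfl, le_rfl⟩
  set o : X := φ.symm ⟨((0:ℝ), (0:ℝ)), ho0⟩ with ho
  -- continuity of `φ.symm` from the carrier (with Euclidean topology) to `X`
  have hg : Continuous (fun p : SpikeCarrier => φ.symm p) := by
    rw [Metric.continuous_iff]
    intro b ε hε
    rcases eq_or_lt_of_le (y_nonneg b.2) with hb | hb
    · refine ⟨ε/2, by positivity, fun a ha => ?_⟩
      rw [Subtype.dist_eq, Prod.dist_eq, Real.dist_eq, Real.dist_eq] at ha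
      have h1 : |(a:ℝ×ℝ).1 - (b:ℝ×ℝ).1| < ε/2 := lt_of_le_of_lt (le_max_left _ _) ha
      have h2 : |(a:ℝ×ℝ).2 - (b:ℝ×ℝ).2| < ε/2 := lt_of_le_of_lt (le_max_right _ _) ha
      rw [key]
      unfold spikeDist
      split_ifs with h
      · linarith
      · have ha2 : (a:ℝ×ℝ).2 - (b:ℝ×ℝ).2 ≤ |(a:ℝ×ℝ).2 - (b:ℝ×ℝ).2| := le_abs_self _
        linarith
    · obtain ⟨Nb, hNb, hbx, hb2⟩ := spike_of_pos b.2 hb.ne'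
      refine ⟨min ε (min (b:ℝ×ℝ).2 1), by positivity, fun a ha => ?_⟩
      rw [Subtype.dist_eq, Prod.dist_eq, Real.dist_eq, Real.dist_eq] at ha
      have h1 : |(a:ℝ×ℝ).1 - (b:ℝ×ℝ).1| < min ε (min (b:ℝ×ℝ).2 1) :=
        lt_of_le_of_lt (le_max_left _ _) ha
      have h2 : |(a:ℝ×ℝ).2 - (b:ℝ×ℝ).2| < min ε (min (b:ℝ×ℝ).2 1) :=
        lt_of_le_of_lt (le_max_right _ _) ha
      have hlt1 : |(a:ℝ×ℝ).1 - (b:ℝ×ℝ).1| < 1 :=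
        lt_of_lt_of_le h1 (le_trans (min_le_right _ _) (min_le_right _ _))
      have hltb : |(a:ℝ×ℝ).2 - (b:ℝ×ℝ).2| < (b:ℝ×ℝ).2 :=
        lt_of_lt_of_le h2 (le_trans (min_le_right _ _) (min_le_left _ _))
      have ha2pos : 0 < (a:ℝ×ℝ).2 := by
        have := abs_lt.1 hltb; linarith [this.1]
      obtain ⟨Na, hNa, hax, _⟩ := spike_of_pos a.2 ha2pos.ne'
      have hNab : Na = Nb := by
        have habs := abs_lt.1 hlt1
        rw [hax, hbx] at habs
        have c1 : (Na:ℝ) < (Nb:ℝ) + 1 := by linarith [habs.2]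
        have c2 : (Nb:ℝ) < (Na:ℝ) + 1 := by linarith [habs.1]
        have c1' : Na < Nb + 1 := by exact_mod_cast c1
        have c2' : Nb < Na + 1 := by exact_mod_cast c2
        omega
      have hxx : (a:ℝ×ℝ).1 = (b:ℝ×ℝ).1 := by rw [hax, hbx, hNab]
      rw [key]
      unfold spikeDist
      rw [if_pos hxx]
      exact lt_of_lt_of_le h2 (min_le_left _ _)
  -- closed balls around the origin are compact
  have hcball : ∀ r : ℝ, 0 ≤ r → IsCompact (closedBall o r) := by
    intro r hr
    set T : Set (ℝ × ℝ) :=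
      (Set.Icc (0:ℝ) r ×ˢ ({0} : Set ℝ)) ∪
        ⋃ n ∈ Set.Icc 1 ⌈r⌉₊, ({((n:ℕ):ℝ)} ×ˢ Set.Icc (0:ℝ) ((n:ℕ):ℝ)) with hT
    have hTc : IsCompact T := by
      refine (isCompact_Icc.prod isCompact_singleton).union ?_
      exact (Set.finite_Icc 1 ⌈r⌉₊).isCompact_biUnion
        (fun n _ => isCompact_singleton.prod isCompact_Icc)
    have hTsub : T ⊆ SpikeCarrier := by
      rintro p (⟨hp1, hp2⟩ | hp)
      · exact Or.inl ⟨hp2, hp1.1⟩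
      · simp only [Set.mem_iUnion, Set.mem_prod, Set.mem_singleton_iff, Set.mem_Icc] at hp
        obtain ⟨n, ⟨hn1, _⟩, hp1, hp2⟩ := hp
        exact Or.inr ⟨n, by omega, hp1, hp2.1, hp2.2⟩
    have hTmem : IsCompact (Subtype.val ⁻¹' T : Set SpikeCarrier) := by
      rw [Topology.IsEmbedding.subtypeVal.isCompact_iff, Subtype.image_preimage_coe,
        inter_eq_self_of_subset_right hTsub]
      exact hTc
    refine IsCompact.of_isClosed_subset (hTmem.image hg) isClosed_closedBall ?_
    intro z hz
    rw [mem_closedBall] at hz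
    have hsd : spikeDist ((0:ℝ),(0:ℝ)) ↑(φ z) ≤ r := by
      have h1 := key ⟨((0:ℝ),(0:ℝ)), ho0⟩ (φ z)
      rw [Equiv.symm_apply_apply] at h1
      rw [← h1, dist_comm]
      exact hz
    refine ⟨φ z, ?_, Equiv.symm_apply_apply φ z⟩
    show ↑(φ z) ∈ T
    set w : ℝ × ℝ := ↑(φ z) with hw
    have hwmem : w ∈ SpikeCarrier := (φ z).2
    rw [spikeDist_pair] at hsd
    by_cases h0 : (0:ℝ) = w.1
    · have hw2 : w.2 = 0 := by
        rcases hwmem with ⟨hh, _⟩ | ⟨M, hM, hxM, _, _⟩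
        · exact hh
        · exfalso
          have : (0:ℝ) < M := by exact_mod_cast hM
          rw [← h0] at hxM; linarith
      exact Or.inl ⟨⟨le_of_eq h0, by rw [← h0]; exact hr⟩, hw2⟩
    · rw [if_neg h0, zero_sub, abs_neg, abs_of_nonneg (x_nonneg hwmem)] at hsd
      have hy0 : 0 ≤ w.2 := y_nonneg hwmem
      by_cases hy : w.2 = 0
      · exact Or.inl ⟨⟨x_nonneg hwmem, by linarith⟩, hy⟩
      · obtain ⟨M, hM, hxM, h2M⟩ := spike_of_pos hwmem hy
        refine Or.inr ?_
        simp only [Set.mem_iUnion, Set.mem_prod, Set.mem_singleton_iff, Set.mem_Icc]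
        have hMr : (M:ℝ) ≤ r := by rw [← hxM]; linarith
        have hMceil : M ≤ ⌈r⌉₊ := by
          have : (M:ℝ) ≤ (⌈r⌉₊:ℝ) := le_trans hMr (Nat.le_ceil r)
          exact_mod_cast this
        exact ⟨M, ⟨hM, hMceil⟩, hxM, hy0, h2M⟩
  have hproper : ProperSpace X := by
    refine ProperSpace.of_isCompact_closedBall_of_le 0 (fun x r hr => ?_)
    refine IsCompact.of_isClosed_subset (hcball (dist x o + r) (add_nonneg dist_nonneg hr))
      isClosed_closedBall ?_
    intro z hz
    rw [mem_closedBall] at *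
    calc dist z o ≤ dist z x + dist x o := dist_triangle _ _ _
      _ ≤ dist x o + r := by linarith
  have hgeo : GeodesicSpace X := by
    intro x y
    have hd : dist x y = spikeDist ↑(φ x) ↑(φ y) := hφ x y
    have hd0 : 0 ≤ spikeDist ↑(φ x) ↑(φ y) := hd ▸ dist_nonneg
    have hmem : ∀ t : ℝ,
        spikePath ↑(φ x) ↑(φ y) (max 0 (min t (spikeDist ↑(φ x) ↑(φ y)))) ∈ SpikeCarrier :=
      fun t => spikePath_mem (φ x).2 (φ y).2 ⟨le_max_left _ _, max_le hd0 (min_le_right _ _)⟩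
    refine ⟨fun t => φ.symm ⟨_, hmem t⟩, ?_, ?_, ?_⟩
    · show φ.symm ⟨_, hmem 0⟩ = x
      have hss : (⟨spikePath ↑(φ x) ↑(φ y) (max 0 (min 0 (spikeDist ↑(φ x) ↑(φ y)))), hmem 0⟩ :
          SpikeCarrier) = φ x := by
        apply Subtype.ext
        show spikePath (↑(φ x)) (↑(φ y)) (max 0 (min 0 (spikeDist ↑(φ x) ↑(φ y)))) = ↑(φ x)
        rw [min_eq_left hd0, max_self]
        exact spikePath_zero (φ x).2
      rw [hss, Equiv.symm_apply_apply]
    · show φ.symm ⟨_, hmem (dist x y)⟩ = y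
      have hss : (⟨spikePath ↑(φ x) ↑(φ y) (max 0 (min (dist x y) (spikeDist ↑(φ x) ↑(φ y)))),
          hmem (dist x y)⟩ : SpikeCarrier) = φ y := by
        apply Subtype.ext
        show spikePath (↑(φ x)) (↑(φ y))
          (max 0 (min (dist x y) (spikeDist ↑(φ x) ↑(φ y)))) = ↑(φ y)
        rw [hd, min_self, max_eq_right hd0]
        exact spikePath_last (φ x).2 (φ y).2
      rw [hss, Equiv.symm_apply_apply]
    · intro s hs t ht
      rw [hd] at hs ht
      show dist (φ.symm _) (φ.symm _) = |s - t|
      rw [key]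
      show spikeDist (spikePath _ _ (max 0 (min s _))) (spikePath _ _ (max 0 (min t _))) = |s - t|
      rw [min_eq_left hs.2, max_eq_right hs.1, min_eq_left ht.2, max_eq_right ht.1]
      exact spikePath_dist (φ x).2 (φ y).2 hs ht
  refine ⟨hproper, hgeo, ?_⟩
  rintro ⟨C, hC⟩
  set N : ℕ := ⌊max C 0⌋₊ + 1 with hN
  have hNpos : 0 < N := Nat.succ_pos _
  have hNR : (0:ℝ) < (N:ℝ) := by exact_mod_cast hNpos
  have hCN : C < (N:ℝ) := by
    have h1 := Nat.lt_floor_add_one (max C 0)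
    have h2 : ((⌊max C 0⌋₊ : ℕ) : ℝ) + 1 = (N:ℝ) := by rw [hN]; push_cast; ring
    calc C ≤ max C 0 := le_max_left _ _
      _ < (⌊max C 0⌋₊:ℝ) + 1 := h1
      _ = (N:ℝ) := h2
  have hqmem : (((N:ℕ):ℝ), ((N:ℕ):ℝ)) ∈ SpikeCarrier :=
    Or.inr ⟨N, hNpos, rfl, le_of_lt hNR, le_rfl⟩
  obtain ⟨α, hray, hα0, hinf⟩ := hC o (φ.symm ⟨(((N:ℕ):ℝ), ((N:ℕ):ℝ)), hqmem⟩)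
  set q : X := φ.symm ⟨(((N:ℕ):ℝ), ((N:ℕ):ℝ)), hqmem⟩ with hq
  have hdo : ∀ t : ℝ, 0 ≤ t → spikeDist ((0:ℝ),(0:ℝ)) ↑(φ (α t)) = t := by
    intro t htpos
    have h1 := key ⟨((0:ℝ),(0:ℝ)), ho0⟩ (φ (α t))
    rw [Equiv.symm_apply_apply] at h1
    rw [← h1]
    show dist o (α t) = t
    rw [← hα0, hray 0 t le_rfl htpos, zero_sub, abs_neg, abs_of_nonneg htpos]
  have main : ∀ s : ℝ, 0 ≤ s → (N:ℝ) ≤ dist q (α s) := by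
    intro s hs
    have hqd : dist q (α s) = spikeDist (((N:ℕ):ℝ), ((N:ℕ):ℝ)) ↑(φ (α s)) := by
      have h1 := key ⟨(((N:ℕ):ℝ), ((N:ℕ):ℝ)), hqmem⟩ (φ (α s))
      rw [Equiv.symm_apply_apply] at h1
      exact h1
    set w : ℝ × ℝ := (↑(φ (α s)) : ℝ × ℝ) with hwdef
    have hwmem : w ∈ SpikeCarrier := (φ (α s)).2
    have hwy : 0 ≤ w.2 := y_nonneg hwmem
    by_cases hx : ((N:ℕ):ℝ) = w.1
    · have hw2 : w.2 = 0 := by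
        by_contra hy
        have hypos : 0 < w.2 := lt_of_le_of_ne hwy (Ne.symm hy)
        obtain ⟨M, hM, hwx, hwle⟩ := spike_of_pos hwmem hy
        have hs' : s = (N:ℝ) + w.2 := by
          have h2 := hdo s hs
          rw [spikeDist_pair, if_neg (show (0:ℝ) ≠ w.1 by rw [← hx]; exact hNR.ne),
            zero_sub, abs_neg, abs_of_nonneg (x_nonneg hwmem)] at h2
          linarith
        set t := s + 2*(N:ℝ) with htdef
        have ht0 : 0 ≤ t := by rw [htdef]; linarith
        set z : ℝ × ℝ := (↑(φ (α t)) : ℝ × ℝ) with hzdef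
        have hzmem : z ∈ SpikeCarrier := (φ (α t)).2
        have hz2 : 0 ≤ z.2 := y_nonneg hzmem
        have hzd := hdo t ht0
        have hz1 : (0:ℝ) ≠ z.1 := by
          intro h0
          have hz20 : z.2 = 0 := by
            rcases hzmem with ⟨hh, _⟩ | ⟨M', hM', hx', _, _⟩
            · exact hh
            · exfalso
              have : (0:ℝ) < M' := by exact_mod_cast hM'
              rw [← h0] at hx'; linarith
          rw [spikeDist_pair, if_pos h0, hz20, sub_zero, abs_zero] at hzd
          rw [htdef] at hzd
          linarith
        rw [spikeDist_pair, if_neg hz1, zero_sub, abs_neg,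
          abs_of_nonneg (x_nonneg hzmem)] at hzd
        have hwz : spikeDist w z = 2*(N:ℝ) := by
          have h3 := hray s t hs ht0
          rw [hφ] at h3
          rw [show s - t = -(2*(N:ℝ)) by rw [htdef]; ring, abs_neg,
            abs_of_nonneg (by linarith)] at h3
          exact h3
        by_cases hzx : w.1 = z.1
        · have hwleN : w.2 ≤ ((N:ℕ):ℝ) := by
            calc w.2 ≤ (M:ℝ) := hwle
              _ = w.1 := hwx.symm
              _ = ((N:ℕ):ℝ) := hx.symm
          have hzleN : z.2 ≤ ((N:ℕ):ℝ) := by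
            by_cases hzy : z.2 = 0
            · rw [hzy]; exact le_of_lt hNR
            · obtain ⟨M', hM', hx', hle'⟩ := spike_of_pos hzmem hzy
              calc z.2 ≤ (M':ℝ) := hle'
                _ = z.1 := hx'.symm
                _ = w.1 := hzx.symm
                _ = ((N:ℕ):ℝ) := hx.symm
          unfold spikeDist at hwz
          rw [if_pos hzx] at hwz
          have habs : |w.2 - z.2| ≤ (N:ℝ) := abs_le.2 ⟨by linarith, by linarith⟩
          linarith
        · unfold spikeDist at hwz
          rw [if_neg hzx] at hwz
          have habs : z.1 - w.1 ≤ |w.1 - z.1| := by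
            rw [abs_sub_comm]; exact le_abs_self _
          have hxw : w.1 = (N:ℝ) := hx.symm
          linarith
      rw [hqd, spikeDist_pair, if_pos hx, hw2, sub_zero, abs_of_nonneg (le_of_lt hNR)]
    · rw [hqd, spikeDist_pair, if_neg hx]
      have h1 : 0 ≤ |((N:ℕ):ℝ) - w.1| := abs_nonneg _
      linarith
  have hne : (α '' Set.Ici 0).Nonempty := ⟨α 0, 0, Set.self_mem_Ici, rfl⟩
  have hlt : infDist q (α '' Set.Ici 0) < (N:ℝ) := lt_of_le_of_lt hinf hCN
  obtain ⟨yy, ⟨s, hsmem, rfl⟩, hdlt⟩ := (Metric.infDist_lt_iff hne).1 hlt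
  exact absurd (main s hsmem) (not_le.2 hdlt)
end

section
/- Let X be a proper geodesic Gromov δ-hyperbolic space in which every point lies on some bi-infinite geodesic line. Then X is almost geodesically complete with constant depending only on δ: for all p, q ∈ X, if ℓ is a geodesic line through q and r₁, r₂ are geodesic rays from p asymptotic to the two ends of ℓ, then q lies within a bounded distance (depending only on δ) of r₁ ∪ r₂. -/
open Metric Set Filter Topology

/-- Every geodesic triangle is δ-thin: each side lies in the δ-neighborhood of the
union of the other two. -/
def DeltaThin (X : Type*) [MetricSpace X] (δ : ℝ) : Prop :=
  ∀ (x y z : X) (γxy γyz γxz : ℝ → X),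
    IsGeodesicSegment γxy x y → IsGeodesicSegment γyz y z → IsGeodesicSegment γxz x z →
    ∀ t ∈ Set.Icc (0:ℝ) (dist x y),
      Metric.infDist (γxy t)
        (γyz '' Set.Icc 0 (dist y z) ∪ γxz '' Set.Icc 0 (dist x z)) ≤ δ


section aux

variable {X : Type*} [MetricSpace X]

lemma ray_seg {r : ℝ → X} (hr : IsGeodesicRay r) {u : ℝ} (hu : 0 ≤ u) :
    IsGeodesicSegment r (r 0) (r u) := by
  have hd : dist (r 0) (r u) = u := by
    rw [hr 0 u le_rfl hu, abs_of_nonpos (by linarith)]; ring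
  refine ⟨rfl, by rw [hd], ?_⟩
  intro s hs t ht
  rw [hd] at hs ht
  exact hr s t hs.1 ht.1

lemma seg_reverse {γ : ℝ → X} {x y : X} (h : IsGeodesicSegment γ x y) :
    IsGeodesicSegment (fun t => γ (dist x y - t)) y x := by
  obtain ⟨h0, h1, hd⟩ := h
  have hxy : dist y x = dist x y := dist_comm y x
  refine ⟨by simpa using h1, by rw [hxy]; simpa using h0, ?_⟩
  intro s hs t ht
  rw [hxy] at hs ht
  rw [hd (dist x y - s) ⟨by linarith [hs.2], by linarith [hs.1]⟩
      (dist x y - t) ⟨by linarith [ht.2], by linarith [ht.1]⟩]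
  have h2 : dist x y - s - (dist x y - t) = t - s := by ring
  rw [h2, abs_sub_comm]

lemma side_case {δ K ε : ℝ} (hδ : 0 ≤ δ) (hthin : DeltaThin X δ) (hgeo : GeodesicSpace X)
    (q a p : X) (r : ℝ → X) (hr : IsGeodesicRay r) (hr0 : r 0 = p)
    (hK : Metric.infDist a (r '' Set.Ici 0) ≤ K)
    (σ : ℝ → X) (hσ : IsGeodesicSegment σ a p) {s : ℝ} (hs : s ∈ Set.Icc 0 (dist a p))
    (hε : 0 < ε) (hε1 : ε ≤ 1)
    (hw : dist q (σ s) ≤ δ + ε)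
    (hfar : 2*δ + K + 4 ≤ dist q a) :
    Metric.infDist q (r '' Set.Ici 0) ≤ 2*δ + 2*ε := by
  have hne : (r '' Set.Ici 0).Nonempty := ⟨r 0, mem_image_of_mem r self_mem_Ici⟩
  obtain ⟨y, hy, hdy⟩ := (infDist_lt_iff hne).mp (lt_of_le_of_lt hK (show K < K + ε by linarith))
  obtain ⟨u, hu, rfl⟩ := hy
  -- segment from p to r u along the ray
  have hray : IsGeodesicSegment r p (r u) := by
    have := ray_seg hr hu; rwa [hr0] at this
  obtain ⟨τ, hτ⟩ := hgeo a (r u)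
  have hthin2 := hthin a p (r u) σ r τ hσ hray hτ s hs
  have hne2 : (r '' Set.Icc 0 (dist p (r u)) ∪ τ '' Set.Icc 0 (dist a (r u))).Nonempty := by
    refine ⟨τ 0, Or.inr (mem_image_of_mem τ ⟨le_rfl, dist_nonneg⟩)⟩
  obtain ⟨z, hz, hdz⟩ := (infDist_lt_iff hne2).mp (lt_of_le_of_lt hthin2 (show δ < δ + ε by linarith))
  rcases hz with hz | hz
  · obtain ⟨v, hv, rfl⟩ := hz
    have : infDist q (r '' Set.Ici 0) ≤ dist q (r v) :=
      infDist_le_dist_of_mem (mem_image_of_mem r hv.1)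
    calc infDist q (r '' Set.Ici 0) ≤ dist q (r v) := this
      _ ≤ dist q (σ s) + dist (σ s) (r v) := dist_triangle _ _ _
      _ ≤ 2*δ + 2*ε := by linarith
  · exfalso
    obtain ⟨v, hv, rfl⟩ := hz
    have hav : dist a (τ v) ≤ dist a (r u) := by
      have := hτ.2.2 0 ⟨le_rfl, dist_nonneg⟩ v hv
      rw [hτ.1] at this
      rw [dist_comm] at this ⊢
      rw [this, abs_of_nonpos (by linarith [hv.1])]
      linarith [hv.2]
    have : dist q a ≤ dist q (σ s) + dist (σ s) (τ v) + dist (τ v) a := by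
      linarith [dist_triangle q (τ v) a, dist_triangle q (σ s) (τ v)]
    rw [dist_comm (τ v) a] at this
    linarith

end aux

lemma limit_ray {X : Type} [MetricSpace X] [ProperSpace X] (p q : X) (δ B : ℝ)
    (σ : ℕ → ℝ → X) (L t : ℕ → ℝ)
    (hL0 : ∀ n, 0 ≤ L n)
    (hLbig : ∀ M : ℝ, ∀ᶠ n in atTop, M ≤ L n)
    (h0 : ∀ n, σ n 0 = p)
    (hiso : ∀ n, ∀ a ∈ Set.Icc 0 (L n), ∀ b ∈ Set.Icc 0 (L n), dist (σ n a) (σ n b) = |a - b|)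
    (ht : ∀ n, t n ∈ Set.Icc 0 B)
    (htL : ∀ n, t n ≤ L n)
    (hq : ∀ n, dist q (σ n (t n)) ≤ δ + 1/(n+1)) :
    ∃ α : ℝ → X, IsGeodesicRay α ∧ α 0 = p ∧ ∃ u, 0 ≤ u ∧ dist q (α u) ≤ δ := by
  classical
  set U : Ultrafilter ℕ := Filter.hyperfilter ℕ with hUdef
  have hUtop : (U : Filter ℕ) ≤ atTop := by
    rw [← Nat.cofinite_eq_atTop]; exact Filter.hyperfilter_le_cofinite
  set c : ℝ → ℕ → X := fun r n => σ n (max 0 (min r (L n))) with hc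
  have key : ∀ r : ℝ, ∃ a : X, Tendsto (c r) U (𝓝 a) := by
    intro r
    have hmem : ∀ n, c r n ∈ closedBall p (max 0 r) := by
      intro n
      have hmm : max 0 (min r (L n)) ∈ Set.Icc 0 (L n) :=
        ⟨le_max_left _ _, max_le (hL0 n) (min_le_right _ _)⟩
      have : dist (c r n) p = max 0 (min r (L n)) := by
        rw [hc]
        simp only
        rw [← h0 n, hiso n _ hmm 0 ⟨le_rfl, hL0 n⟩, sub_zero,
          abs_of_nonneg (le_max_left _ _)]
      rw [mem_closedBall, this]
      exact max_le (le_max_left _ _) (le_trans (min_le_left _ _) (le_max_right _ _))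
    obtain ⟨a, -, ha⟩ := (isCompact_closedBall p (max 0 r)).ultrafilter_le_nhds
      (U.map (c r)) (by
        rw [Ultrafilter.coe_map, le_principal_iff, mem_map]
        exact Filter.univ_mem' hmem)
    exact ⟨a, ha⟩
  set α : ℝ → X := fun r => (key r).choose with hα
  have hαt : ∀ r, Tendsto (c r) U (𝓝 (α r)) := fun r => (key r).choose_spec
  have hclamp : ∀ r : ℝ, 0 ≤ r → ∀ᶠ n in (U : Filter ℕ), max 0 (min r (L n)) = r := by
    intro r hr
    filter_upwards [hUtop (hLbig r)] with n hn
    rw [min_eq_left hn, max_eq_right hr]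
  have hray : IsGeodesicRay α := by
    intro s u hs hu
    have hev : ∀ᶠ n in (U : Filter ℕ),
        dist (c s n) (c u n) = |s - u| := by
      filter_upwards [hUtop (hLbig (max s u)), hclamp s hs, hclamp u hu] with n hn hcs hcu
      rw [hc]; simp only
      rw [hcs, hcu]
      exact hiso n s ⟨hs, le_trans (le_max_left _ _) hn⟩ u ⟨hu, le_trans (le_max_right _ _) hn⟩
    have h1 : Tendsto (fun n => dist (c s n) (c u n)) U (𝓝 (dist (α s) (α u))) :=
      (hαt s).dist (hαt u)
    have h2 : Tendsto (fun n => dist (c s n) (c u n)) U (𝓝 |s - u|) :=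
      Tendsto.congr' (by filter_upwards [hev] with n hn using hn.symm) tendsto_const_nhds
    exact tendsto_nhds_unique h1 h2
  have hα0 : α 0 = p := by
    have h1 : Tendsto (c 0) U (𝓝 p) := by
      have : ∀ n, c 0 n = p := by
        intro n
        rw [hc]; simp only
        rw [min_eq_left (hL0 n), max_self, h0 n]
      exact Tendsto.congr' (Filter.univ_mem' fun n => (this n).symm) tendsto_const_nhds
    exact tendsto_nhds_unique (hαt 0) h1
  -- limit parameter
  have hB : (0:ℝ) ≤ B := le_trans (ht 0).1 (ht 0).2
  obtain ⟨u, huI, huT⟩ := (isCompact_Icc : IsCompact (Set.Icc (0:ℝ) B)).ultrafilter_le_nhds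
    (U.map t) (by
      rw [Ultrafilter.coe_map, le_principal_iff, mem_map]
      exact Filter.univ_mem' ht)
  have huT' : Tendsto t U (𝓝 u) := huT
  refine ⟨α, hray, hα0, u, huI.1, ?_⟩
  have hev : ∀ᶠ n in (U : Filter ℕ),
      dist q (c u n) ≤ (δ + 1/(n+1)) + |t n - u| := by
    filter_upwards [hUtop (hLbig u), hclamp u huI.1] with n hn hcu
    have hd : dist (σ n (t n)) (σ n u) = |t n - u| :=
      hiso n (t n) ⟨(ht n).1, htL n⟩ u ⟨huI.1, hn⟩
    calc dist q (c u n) ≤ dist q (σ n (t n)) + dist (σ n (t n)) (c u n) := dist_triangle _ _ _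
      _ ≤ (δ + 1/(n+1)) + |t n - u| := by
          rw [hc]; simp only
          rw [hcu, hd]
          exact add_le_add (hq n) le_rfl
  have h1 : Tendsto (fun n => dist q (c u n)) U (𝓝 (dist q (α u))) :=
    tendsto_const_nhds.dist (hαt u)
  have h2 : Tendsto (fun n : ℕ => (δ + 1/(n+1)) + |t n - u|) U (𝓝 δ) := by
    have ha : Tendsto (fun n : ℕ => δ + 1/((n:ℝ)+1)) U (𝓝 (δ + 0)) :=
      (tendsto_const_nhds.add tendsto_one_div_add_atTop_nhds_zero_nat).mono_left hUtop
    have hb : Tendsto (fun n => |t n - u|) U (𝓝 |u - u|) :=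
      ((huT'.sub tendsto_const_nhds).abs)
    have : Tendsto (fun n : ℕ => (δ + 1/((n:ℝ)+1)) + |t n - u|) U (𝓝 ((δ + 0) + |u - u|)) :=
      ha.add hb
    simpa using this
  exact le_of_tendsto_of_tendsto h1 h2 hev


/-- A proper geodesic δ-hyperbolic space in which every point lies on a bi-infinite
geodesic line is almost geodesically complete, with constant depending only on δ:
for any p, q, any geodesic line ℓ through q, and any geodesic rays r₁, r₂ from p
asymptotic to the two ends of ℓ, the point q is within distance C(δ) of r₁ ∪ r₂. -/
theorem hyperbolic_almost_geodesically_complete :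
    ∃ C : ℝ → ℝ, ∀ (X : Type) [MetricSpace X] (δ : ℝ), 0 ≤ δ →
      ProperSpace X → GeodesicSpace X → DeltaThin X δ →
      (∀ q : X, ∃ ℓ : ℝ → X, Isometry ℓ ∧ ∃ t : ℝ, ℓ t = q) →
      (∀ (p q : X) (ℓ : ℝ → X), Isometry ℓ → ℓ 0 = q →
        ∀ r₁ r₂ : ℝ → X, IsGeodesicRay r₁ → r₁ 0 = p → IsGeodesicRay r₂ → r₂ 0 = p →
        (∃ K : ℝ, ∀ t : ℝ, 0 ≤ t →
          Metric.infDist (r₁ t) (ℓ '' Set.Ici 0) ≤ K ∧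
          Metric.infDist (ℓ t) (r₁ '' Set.Ici 0) ≤ K) →
        (∃ K : ℝ, ∀ t : ℝ, 0 ≤ t →
          Metric.infDist (r₂ t) (ℓ '' Set.Iic 0) ≤ K ∧
          Metric.infDist (ℓ (-t)) (r₂ '' Set.Ici 0) ≤ K) →
        Metric.infDist q (r₁ '' Set.Ici 0 ∪ r₂ '' Set.Ici 0) ≤ C δ) ∧
      (∀ p q : X, ∃ α : ℝ → X, IsGeodesicRay α ∧ α 0 = p ∧
        Metric.infDist q (α '' Set.Ici 0) ≤ C δ) := by
  classical
  refine ⟨fun d => 2*d, ?_⟩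
  intro X _ δ hδ hproper hgeo hthin hline
  constructor
  · -- Part 1
    rintro p q ℓ hℓ hℓ0 r₁ r₂ hr₁ hr₁0 hr₂ hr₂0 ⟨K₁, hK₁⟩ ⟨K₂, hK₂⟩
    have dℓ : ∀ a b : ℝ, dist (ℓ a) (ℓ b) = |a - b| := fun a b => by
      rw [hℓ.dist_eq, Real.dist_eq]
    set T : ℝ := 2*δ + |K₁| + |K₂| + 4 with hTdef
    have hT0 : 0 ≤ T := by
      have := abs_nonneg K₁; have := abs_nonneg K₂; positivity
    have hD : dist (ℓ (-T)) (ℓ T) = 2*T := by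
      rw [dℓ, abs_of_nonpos (by linarith)]; ring
    have hxy : IsGeodesicSegment (fun s => ℓ (s - T)) (ℓ (-T)) (ℓ T) := by
      refine ⟨by norm_num, ?_, ?_⟩
      · rw [hD]; show ℓ (2*T - T) = ℓ T; rw [show 2*T - T = T from by ring]
      · intro s _ t _
        rw [dℓ]; congr 1; ring
    obtain ⟨σ₁, hσ₁⟩ := hgeo (ℓ T) p
    obtain ⟨σ₂, hσ₂⟩ := hgeo (ℓ (-T)) p
    have hthin0 := hthin (ℓ (-T)) (ℓ T) p _ σ₁ σ₂ hxy hσ₁ hσ₂ T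
      (by rw [hD]; exact ⟨hT0, by linarith⟩)
    have hγT : ℓ (T - T) = q := by rw [sub_self, hℓ0]
    rw [hγT] at hthin0
    have hKa : Metric.infDist (ℓ T) (r₁ '' Set.Ici 0) ≤ K₁ := (hK₁ T hT0).2
    have hKb : Metric.infDist (ℓ (-T)) (r₂ '' Set.Ici 0) ≤ K₂ := (hK₂ T hT0).2
    have hK₁0 : 0 ≤ K₁ := le_trans Metric.infDist_nonneg hKa
    have hK₂0 : 0 ≤ K₂ := le_trans Metric.infDist_nonneg hKb
    have hfar₁ : 2*δ + K₁ + 4 ≤ dist q (ℓ T) := by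
      rw [← hℓ0, dℓ, abs_of_nonpos (by linarith), hTdef]
      have h1 : K₁ ≤ |K₁| := le_abs_self K₁
      have h2 : 0 ≤ |K₂| := abs_nonneg K₂
      linarith
    have hfar₂ : 2*δ + K₂ + 4 ≤ dist q (ℓ (-T)) := by
      rw [← hℓ0, dℓ, abs_of_nonneg (by linarith), hTdef]
      have h1 : K₂ ≤ |K₂| := le_abs_self K₂
      have h2 : 0 ≤ |K₁| := abs_nonneg K₁
      linarith
    have hne1 : (r₁ '' Set.Ici 0).Nonempty := ⟨r₁ 0, Set.mem_image_of_mem r₁ Set.self_mem_Ici⟩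
    have hne2 : (r₂ '' Set.Ici 0).Nonempty := ⟨r₂ 0, Set.mem_image_of_mem r₂ Set.self_mem_Ici⟩
    refine le_of_forall_pos_le_add ?_
    intro ε' hε'
    show Metric.infDist q (r₁ '' Set.Ici 0 ∪ r₂ '' Set.Ici 0) ≤ 2*δ + ε'
    set ε : ℝ := min (ε'/2) 1 with hεdef
    have hε : 0 < ε := lt_min (by linarith) one_pos
    have hε1 : ε ≤ 1 := min_le_right _ _
    have hεε' : 2*ε ≤ ε' := by
      have := min_le_left (ε'/2) 1; linarith
    have hneU : (σ₁ '' Set.Icc 0 (dist (ℓ T) p) ∪ σ₂ '' Set.Icc 0 (dist (ℓ (-T)) p)).Nonempty :=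
      ⟨σ₁ 0, Or.inl (Set.mem_image_of_mem σ₁ ⟨le_rfl, dist_nonneg⟩)⟩
    obtain ⟨w, hw, hdw⟩ := (Metric.infDist_lt_iff hneU).mp
      (lt_of_le_of_lt hthin0 (show δ < δ + ε by linarith))
    rcases hw with hw | hw
    · obtain ⟨s, hs, rfl⟩ := hw
      have := side_case hδ hthin hgeo q (ℓ T) p r₁ hr₁ hr₁0 hKa σ₁ hσ₁ hs hε hε1
        (le_of_lt hdw) hfar₁
      have hle : Metric.infDist q (r₁ '' Set.Ici 0 ∪ r₂ '' Set.Ici 0) ≤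
          Metric.infDist q (r₁ '' Set.Ici 0) :=
        Metric.infDist_le_infDist_of_subset Set.subset_union_left hne1
      linarith
    · obtain ⟨s, hs, rfl⟩ := hw
      have := side_case hδ hthin hgeo q (ℓ (-T)) p r₂ hr₂ hr₂0 hKb σ₂ hσ₂ hs hε hε1
        (le_of_lt hdw) hfar₂
      have hle : Metric.infDist q (r₁ '' Set.Ici 0 ∪ r₂ '' Set.Ici 0) ≤
          Metric.infDist q (r₂ '' Set.Ici 0) :=
        Metric.infDist_le_infDist_of_subset Set.subset_union_right hne2
      linarith
  · -- Part 2
    intro p q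
    obtain ⟨ℓ0, hℓ0iso, t0, ht0⟩ := hline q
    set ℓ : ℝ → X := fun s => ℓ0 (t0 + s) with hℓdef
    have hadd : Isometry (fun s : ℝ => t0 + s) :=
      Isometry.of_dist_eq (fun a b => by
        rw [Real.dist_eq, Real.dist_eq]; congr 1; ring)
    have hℓ : Isometry ℓ := hℓ0iso.comp hadd
    have hℓ0 : ℓ 0 = q := by rw [hℓdef]; simpa using ht0
    have dℓ : ∀ a b : ℝ, dist (ℓ a) (ℓ b) = |a - b| := fun a b => by
      rw [hℓ.dist_eq, Real.dist_eq]
    have claim : ∀ n : ℕ, ∃ (σ : ℝ → X) (L s : ℝ),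
        0 ≤ L ∧ (n:ℝ) - dist p q ≤ L ∧ σ 0 = p ∧
        (∀ a ∈ Set.Icc (0:ℝ) L, ∀ b ∈ Set.Icc (0:ℝ) L, dist (σ a) (σ b) = |a - b|) ∧
        s ∈ Set.Icc 0 L ∧ s ≤ dist p q + δ + 1 ∧ dist q (σ s) ≤ δ + 1/(n+1) := by
      intro n
      set T : ℝ := (n : ℝ) with hTdef
      have hT0 : (0:ℝ) ≤ T := Nat.cast_nonneg n
      have hD : dist (ℓ (-T)) (ℓ T) = 2*T := by
        rw [dℓ, abs_of_nonpos (by linarith)]; ring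
      have hxy : IsGeodesicSegment (fun s => ℓ (s - T)) (ℓ (-T)) (ℓ T) := by
        refine ⟨by norm_num, ?_, ?_⟩
        · rw [hD]; show ℓ (2*T - T) = ℓ T; rw [show 2*T - T = T from by ring]
        · intro s _ t _
          rw [dℓ]; congr 1; ring
      obtain ⟨σ₁, hσ₁⟩ := hgeo p (ℓ T)
      obtain ⟨σ₂, hσ₂⟩ := hgeo p (ℓ (-T))
      have hthin0 := hthin (ℓ (-T)) (ℓ T) p _ _ _ hxy (seg_reverse hσ₁) (seg_reverse hσ₂) T
        (by rw [hD]; exact ⟨hT0, by linarith⟩)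
      have hγT : ℓ (T - T) = q := by rw [sub_self, hℓ0]
      rw [hγT] at hthin0
      have hpos : (0:ℝ) < 1/(n+1) := by positivity
      have hneU : ((fun t => σ₁ (dist p (ℓ T) - t)) '' Set.Icc 0 (dist (ℓ T) p) ∪
          (fun t => σ₂ (dist p (ℓ (-T)) - t)) '' Set.Icc 0 (dist (ℓ (-T)) p)).Nonempty := by
        exact ⟨_, Or.inl (Set.mem_image_of_mem _ ⟨le_rfl, dist_nonneg⟩)⟩
      obtain ⟨w, hw, hdw⟩ := (Metric.infDist_lt_iff hneU).mp
        (lt_of_le_of_lt hthin0 (show δ < δ + 1/(n+1) by linarith))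
      have hLb : ∀ u : ℝ, T - dist p q ≤ dist p (ℓ u) → True := fun _ _ => trivial
      rcases hw with hw | hw
      · obtain ⟨v, hv, rfl⟩ := hw
        rw [dist_comm (ℓ T) p] at hv
        refine ⟨σ₁, dist p (ℓ T), dist p (ℓ T) - v, dist_nonneg, ?_, hσ₁.1, hσ₁.2.2, 
          ⟨by linarith [hv.2], by linarith [hv.1]⟩, ?_, le_of_lt hdw⟩
        · have h1 : dist q (ℓ T) ≤ dist q p + dist p (ℓ T) := dist_triangle _ _ _
          have h2 : dist q (ℓ T) = T := by
            rw [← hℓ0, dℓ, abs_of_nonpos (by linarith)]; ring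
          rw [dist_comm q p] at h1
          linarith
        · have hmem : dist p (ℓ T) - v ∈ Set.Icc 0 (dist p (ℓ T)) :=
            ⟨by linarith [hv.2], by linarith [hv.1]⟩
          have hdp : dist p (σ₁ (dist p (ℓ T) - v)) = dist p (ℓ T) - v := by
            have h := hσ₁.2.2 0 ⟨le_rfl, dist_nonneg⟩ _ hmem
            rw [hσ₁.1] at h
            rw [h, abs_of_nonpos (by linarith [hv.2])]
            ring
          have h3 : dist p (σ₁ (dist p (ℓ T) - v)) ≤ dist p q + dist q (σ₁ (dist p (ℓ T) - v)) :=
            dist_triangle _ _ _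
          have h4 : (1:ℝ)/(n+1) ≤ 1 := by
            rw [div_le_one (by positivity)]; linarith [Nat.cast_nonneg (α := ℝ) n]
          linarith [le_of_lt hdw]
      · obtain ⟨v, hv, rfl⟩ := hw
        rw [dist_comm (ℓ (-T)) p] at hv
        refine ⟨σ₂, dist p (ℓ (-T)), dist p (ℓ (-T)) - v, dist_nonneg, ?_, hσ₂.1, hσ₂.2.2,
          ⟨by linarith [hv.2], by linarith [hv.1]⟩, ?_, le_of_lt hdw⟩
        · have h1 : dist q (ℓ (-T)) ≤ dist q p + dist p (ℓ (-T)) := dist_triangle _ _ _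
          have h2 : dist q (ℓ (-T)) = T := by
            rw [← hℓ0, dℓ, abs_of_nonneg (by linarith)]; ring
          rw [dist_comm q p] at h1
          linarith
        · have hmem : dist p (ℓ (-T)) - v ∈ Set.Icc 0 (dist p (ℓ (-T))) :=
            ⟨by linarith [hv.2], by linarith [hv.1]⟩
          have hdp : dist p (σ₂ (dist p (ℓ (-T)) - v)) = dist p (ℓ (-T)) - v := by
            have h := hσ₂.2.2 0 ⟨le_rfl, dist_nonneg⟩ _ hmem
            rw [hσ₂.1] at h
            rw [h, abs_of_nonpos (by linarith [hv.2])]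
            ring
          have h3 : dist p (σ₂ (dist p (ℓ (-T)) - v)) ≤
              dist p q + dist q (σ₂ (dist p (ℓ (-T)) - v)) := dist_triangle _ _ _
          have h4 : (1:ℝ)/(n+1) ≤ 1 := by
            rw [div_le_one (by positivity)]; linarith [Nat.cast_nonneg (α := ℝ) n]
          linarith [le_of_lt hdw]
    choose σ L s h1 h2 h3 h4 h5 h6 h7 using claim
    have hLbig : ∀ M : ℝ, ∀ᶠ n in atTop, M ≤ L n := by
      intro M
      rw [Filter.eventually_atTop]
      refine ⟨⌈M + dist p q⌉₊, fun n hn => ?_⟩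
      have : M + dist p q ≤ (n : ℝ) :=
        le_trans (Nat.le_ceil _) (Nat.cast_le.mpr hn)
      linarith [h2 n]
    have hs0 : ∀ n, s n ∈ Set.Icc 0 (dist p q + δ + 1) :=
      fun n => ⟨(h5 n).1, h6 n⟩
    obtain ⟨α, hαray, hα0, u, hu0, hqu⟩ := limit_ray p q δ (dist p q + δ + 1) σ L s
      h1 hLbig h3 h4 hs0 (fun n => (h5 n).2) h7
    refine ⟨α, hαray, hα0, ?_⟩
    show Metric.infDist q (α '' Set.Ici 0) ≤ 2*δ
    calc Metric.infDist q (α '' Set.Ici 0) ≤ dist q (α u) :=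
        Metric.infDist_le_dist_of_mem (Set.mem_image_of_mem α hu0)
      _ ≤ δ := hqu
      _ ≤ 2*δ := by linarith
end
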